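/- Volterra expansion: let D² and P be n×n complex matrices with P nilpotent of order k+1 lying in a nilpotent ideal (e.g. P has strictly positive form degree so P^{k+1} = 0 in a suitable graded algebra). Then e^{-(D² + P)} = e^{-D²} + Σ_{j=1}^{k} (-1)^j ∫_{Δ_j} e^{-u₀D²} P e^{-u₁D²} P ⋯ P e^{-u_jD²} dσ(u), where Δ_j = {(u₀,…,u_j) ∈ [0,1]^{j+1} : Σ u_i = 1}; in particular the series terminates after k terms. -/

import Mathlib

open MeasureTheory

namespace Stmt16Aux

open NormedSpace

variable {A : Type*} [NormedRing A] [NormedAlgebra ℂ A] [CompleteSpace A]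

noncomputable def ratAlg : NormedAlgebra ℚ A := NormedAlgebra.restrictScalars ℚ ℂ A

attribute [local instance] ratAlg

lemma expDeriv (X : A) (t : ℝ) : HasDerivAt (fun s : ℝ => exp (s • X)) (exp (t • X) * X) t := by
  have := hasDerivAt_exp_smul_const (𝕂 := ℝ) X t
  simpa using this

lemma expCont (X : A) : Continuous fun s : ℝ => exp (s • X) :=
  exp_continuous.comp (by fun_prop)

lemma expSplit (X : A) (t s : ℝ) :
    exp ((t - s) • X) = exp (t • X) * exp (s • (-X)) := by
  rw [← NormedSpace.exp_add_of_commute (((Commute.refl X).neg_right.smul_left t).smul_right s)]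
  congr 1
  rw [sub_smul, smul_neg, sub_eq_add_neg]

lemma duhamel (X Y : A) (t : ℝ) :
    exp (t • (X + Y)) = exp (t • X) +
      ∫ s in (0:ℝ)..t, exp (s • (X + Y)) * Y * exp ((t - s) • X) := by
  set Z := X + Y with hZ
  have hg : ∀ s ∈ Set.uIcc (0:ℝ) t, HasDerivAt
      (fun s : ℝ => exp (s • Z) * exp ((t - s) • X))
      (exp (s • Z) * Y * exp ((t - s) • X)) s := by
    intro s _
    have h1 : HasDerivAt (fun s : ℝ => exp (s • Z)) (exp (s • Z) * Z) s := expDeriv Z s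
    have h2 : HasDerivAt (fun s : ℝ => exp ((t - s) • X))
        (-(exp ((t - s) • X) * X)) s := by
      have h5 : HasDerivAt (fun s : ℝ => exp (t • X) * exp (s • (-X)))
          (exp (t • X) * (exp (s • (-X)) * (-X))) s := (expDeriv (-X) s).const_mul _
      have := h5.congr_of_eventuallyEq (Filter.Eventually.of_forall fun r => (expSplit X t r))
      refine this.congr_deriv ?_
      rw [expSplit X t s]
      noncomm_ring
    have := h1.mul h2
    refine this.congr_deriv ?_
    have hc : Commute X (exp ((t - s) • X)) :=
      ((Commute.refl X).smul_right (t - s)).exp_right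
    have h4 : exp (s • Z) * -(exp ((t - s) • X) * X)
        = -(exp (s • Z) * X * exp ((t - s) • X)) := by
      rw [← hc.eq]; noncomm_ring
    rw [h4, hZ]
    noncomm_ring
  have hint : IntervalIntegrable
      (fun s : ℝ => exp (s • Z) * Y * exp ((t - s) • X)) volume 0 t := by
    apply Continuous.intervalIntegrable
    exact ((expCont Z).mul continuous_const).mul
      ((expCont X).comp (by fun_prop : Continuous fun s : ℝ => t - s))
  have := intervalIntegral.integral_eq_sub_of_hasDerivAt hg hint
  rw [this]
  simp

/-- `F D t = e^{-tD}`. -/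
noncomputable def F (D : A) (t : ℝ) : A := exp (-(t • D))

lemma F_eq (D : A) (t : ℝ) : F D t = exp (t • (-D)) := by rw [F, smul_neg]

lemma contF (D : A) : Continuous (F D) := by
  have : F D = fun t => exp (t • (-D)) := funext (F_eq D)
  rw [this]; exact expCont (-D)

/-- the simplex -/
def S (j : ℕ) : Set (Fin j → ℝ) := {u : Fin j → ℝ | (∀ i, 0 ≤ u i) ∧ ∑ i, u i ≤ 1}

lemma isClosed_S (j : ℕ) : IsClosed (S j) := by
  have h1 : IsClosed {u : Fin j → ℝ | ∀ i, 0 ≤ u i} := by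
    have : {u : Fin j → ℝ | ∀ i, 0 ≤ u i} = ⋂ i, {u : Fin j → ℝ | 0 ≤ u i} := by
      ext u; simp
    rw [this]
    exact isClosed_iInter fun i => isClosed_le continuous_const (continuous_apply i)
  have h2 : IsClosed {u : Fin j → ℝ | ∑ i, u i ≤ 1} :=
    isClosed_le (by fun_prop) continuous_const
  exact h1.inter h2

lemma isCompact_S (j : ℕ) : IsCompact (S j) := by
  have hsub : S j ⊆ Set.pi Set.univ fun _ : Fin j => Set.Icc (0:ℝ) 1 := by
    intro u hu i _
    refine ⟨hu.1 i, ?_⟩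
    calc u i ≤ ∑ i', u i' := Finset.single_le_sum (fun i' _ => hu.1 i') (Finset.mem_univ i)
    _ ≤ 1 := hu.2
  exact (isCompact_univ_pi fun _ => isCompact_Icc).of_isClosed_subset (isClosed_S j) hsub

lemma measurableSet_S (j : ℕ) : MeasurableSet (S j) := (isClosed_S j).measurableSet

/-- product part of the integrand -/
noncomputable def Q (D P : A) {j : ℕ} (u : Fin j → ℝ) : A :=
  (List.ofFn (fun i => P * F D (u i))).prod

lemma contQ (D P : A) (j : ℕ) : Continuous (Q D P (j := j)) := by
  have : (Q D P (j := j)) = fun u => ((List.finRange j).map fun i => P * F D (u i)).prod := by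
    funext u; rw [Q, List.ofFn_eq_map]
  rw [this]
  exact continuous_list_prod _ fun i _ =>
    continuous_const.mul ((contF D).comp (continuous_apply i))

lemma Q_cons (D P : A) {m : ℕ} (x : ℝ) (u : Fin m → ℝ) :
    Q D P (Fin.cons x u) = (P * F D x) * Q D P u := by
  rw [Q, Q, List.ofFn_succ]
  simp [Fin.cons_zero, Fin.cons_succ]

noncomputable def T (D P : A) (j : ℕ) : A :=
  ∫ u in S j, F D (1 - ∑ i, u i) * Q D P u

noncomputable def R (D P : A) (j : ℕ) : A :=
  ∫ u in S j, F (D + P) (1 - ∑ i, u i) * Q D P u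

lemma integrableOn_body (D P : A) (j : ℕ) (G : ℝ → A) (hG : Continuous G) :
    IntegrableOn (fun u : Fin j → ℝ => G (1 - ∑ i, u i) * Q D P u) (S j) := by
  apply ContinuousOn.integrableOn_compact (isCompact_S j)
  apply Continuous.continuousOn
  exact (hG.comp (by fun_prop)).mul (contQ D P j)

/-- the Fubini step -/
lemma fubini_step {m : ℕ} (Φ : (Fin (m+1) → ℝ) → A) (hΦ : Continuous Φ) :
    ∫ v in S (m+1), Φ v
      = ∫ u in S m, ∫ x in (0:ℝ)..(1 - ∑ i, u i), Φ (Fin.cons x u) := by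
  have hS1 := measurableSet_S (m+1)
  have hIntOn : IntegrableOn Φ (S (m+1)) :=
    hΦ.continuousOn.integrableOn_compact (isCompact_S (m+1))
  have hInd : Integrable ((S (m+1)).indicator Φ) :=
    (integrable_indicator_iff hS1).mpr hIntOn
  set e := MeasurableEquiv.piFinSuccAbove (fun _ : Fin (m+1) => ℝ) 0 with he
  have mp : MeasurePreserving e.symm :=
    (volume_preserving_piFinSuccAbove (fun _ : Fin (m+1) => ℝ) 0).symm
  have hsymm : ∀ p : ℝ × (Fin m → ℝ), e.symm p = Fin.cons p.1 p.2 := by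
    intro p
    ext i
    simp [he, MeasurableEquiv.piFinSuccAbove_symm_apply, Fin.insertNthEquiv, Fin.insertNth_zero]
  have hInd2 : Integrable (fun p : ℝ × (Fin m → ℝ) =>
      (S (m+1)).indicator Φ (Fin.cons p.1 p.2)) (volume.prod volume) := by
    have := (mp.integrable_comp_emb (MeasurableEquiv.measurableEmbedding _)).mpr hInd
    rw [MeasureTheory.Measure.volume_eq_prod] at this
    convert this using 2 with p
    rw [Function.comp_apply, hsymm p]
  have hmem : ∀ (x : ℝ) (u : Fin m → ℝ),
      Fin.cons x u ∈ S (m+1) ↔ u ∈ S m ∧ x ∈ Set.Icc 0 (1 - ∑ i, u i) := by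
    intro x u
    constructor
    · rintro ⟨h1, h2⟩
      rw [Fin.sum_cons] at h2
      have hx0 : 0 ≤ x := by simpa using h1 0
      have hui : ∀ i, 0 ≤ u i := fun i => by simpa using h1 i.succ
      have hsum : ∑ i, u i ≤ 1 := by
        have : 0 + ∑ i, u i ≤ x + ∑ i, u i := by linarith
        linarith
      exact ⟨⟨hui, hsum⟩, ⟨hx0, by linarith⟩⟩
    · rintro ⟨⟨hui, _⟩, hx0, hx1⟩
      refine ⟨?_, ?_⟩
      · intro i
        refine Fin.cases ?_ ?_ i
        · simpa using hx0
        · intro i'; simpa using hui i'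
      · rw [Fin.sum_cons]; linarith
  calc ∫ v in S (m+1), Φ v
      = ∫ v, (S (m+1)).indicator Φ v := (integral_indicator hS1).symm
    _ = ∫ p : ℝ × (Fin m → ℝ), (S (m+1)).indicator Φ (e.symm p) :=
        (mp.integral_comp' _).symm
    _ = ∫ u : Fin m → ℝ, ∫ x : ℝ, (S (m+1)).indicator Φ (Fin.cons x u) := by
        rw [MeasureTheory.Measure.volume_eq_prod]
        simp_rw [hsymm]
        rw [integral_prod_symm _ hInd2]
    _ = ∫ u : Fin m → ℝ, (S m).indicator
          (fun u => ∫ x in (0:ℝ)..(1 - ∑ i, u i), Φ (Fin.cons x u)) u := by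
        congr 1
        funext u
        by_cases hu : u ∈ S m
        · have h0 : (0:ℝ) ≤ 1 - ∑ i, u i := by
            have := hu.2; linarith
          have : (fun x : ℝ => (S (m+1)).indicator Φ (Fin.cons x u))
              = (Set.Icc (0:ℝ) (1 - ∑ i, u i)).indicator (fun x => Φ (Fin.cons x u)) := by
            funext x
            by_cases hx : x ∈ Set.Icc (0:ℝ) (1 - ∑ i, u i)
            · rw [Set.indicator_of_mem hx, Set.indicator_of_mem ((hmem x u).mpr ⟨hu, hx⟩)]
            · rw [Set.indicator_of_notMem hx, Set.indicator_of_notMem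
                (fun hmem' => hx ((hmem x u).mp hmem').2)]
          rw [this, Set.indicator_of_mem hu, integral_indicator measurableSet_Icc,
            integral_Icc_eq_integral_Ioc, intervalIntegral.integral_of_le h0]
        · rw [Set.indicator_of_notMem hu]
          have : (fun x : ℝ => (S (m+1)).indicator Φ (Fin.cons x u)) = fun _ => 0 := by
            funext x
            exact Set.indicator_of_notMem (fun hmem' => hu ((hmem x u).mp hmem').1) _
          rw [this, integral_zero]
    _ = ∫ u in S m, ∫ x in (0:ℝ)..(1 - ∑ i, u i), Φ (Fin.cons x u) :=
        integral_indicator (measurableSet_S m)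


lemma pointwise_duhamel (D P : A) {m : ℕ} (u : Fin m → ℝ) :
    F (D + P) (1 - ∑ i, u i) * Q D P u
      = F D (1 - ∑ i, u i) * Q D P u -
        ∫ x in (0:ℝ)..(1 - ∑ i, u i),
          F (D + P) (1 - ∑ i, (Fin.cons x u : Fin (m+1) → ℝ) i) * Q D P (Fin.cons x u) := by
  set t : ℝ := 1 - ∑ i, u i with ht
  set c : A := Q D P u with hc
  -- Duhamel in F-notation
  have hd : F (D + P) t = F D t +
      ∫ s in (0:ℝ)..t, F (D + P) s * (-P) * F D (t - s) := by
    have := duhamel (-D) (-P) t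
    rw [← neg_add] at this
    simpa only [F_eq] using this
  -- multiply by c on the right
  have hIc : IntervalIntegrable (fun s : ℝ => F (D + P) s * (-P) * F D (t - s)) volume 0 t := by
    apply Continuous.intervalIntegrable
    exact ((contF _).mul continuous_const).mul ((contF D).comp (by fun_prop))
  have hmulc : F (D + P) t * c = F D t * c +
      ∫ s in (0:ℝ)..t, (F (D + P) s * (-P) * F D (t - s)) * c := by
    rw [hd, add_mul]
    congr 1
    have := ContinuousLinearMap.intervalIntegral_comp_comm
      ((ContinuousLinearMap.mul ℝ A).flip c) hIc
    simpa [ContinuousLinearMap.flip_apply, ContinuousLinearMap.mul_apply'] using this.symm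
  -- rewrite the integral with substitution s = t - x
  set h : ℝ → A := fun s => (F (D + P) s * (-P) * F D (t - s)) * c with hh
  have hsub : (∫ x in (0:ℝ)..t, h (t - x)) = ∫ s in (0:ℝ)..t, h s := by
    rw [intervalIntegral.integral_comp_sub_left h t, sub_self, sub_zero]
  rw [hmulc, ← hsub]
  have hint_eq : (∫ x in (0:ℝ)..t, h (t - x))
      = ∫ x in (0:ℝ)..t,
          -(F (D + P) (1 - ∑ i, (Fin.cons x u : Fin (m+1) → ℝ) i) * Q D P (Fin.cons x u)) := by
    apply intervalIntegral.integral_congr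
    intro x _
    have h1 : (1 : ℝ) - ∑ i, (Fin.cons x u : Fin (m+1) → ℝ) i = t - x := by
      rw [Fin.sum_cons, ht]; ring
    rw [hh]
    simp only [h1, Q_cons, sub_sub_cancel]
    noncomm_ring
  rw [hint_eq, intervalIntegral.integral_neg]
  abel

lemma key (D P : A) (m : ℕ) : R D P m = T D P m - R D P (m + 1) := by
  have hphi : Continuous fun v : Fin (m+1) → ℝ =>
      F (D + P) (1 - ∑ i, v i) * Q D P v :=
    ((contF _).comp (by fun_prop)).mul (contQ D P (m+1))
  have hfub := fubini_step (fun v : Fin (m+1) → ℝ =>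
      F (D + P) (1 - ∑ i, v i) * Q D P v) hphi
  have h1 : IntegrableOn (fun u : Fin m → ℝ => F D (1 - ∑ i, u i) * Q D P u) (S m) :=
    integrableOn_body D P m (F D) (contF D)
  have h0 : IntegrableOn (fun u : Fin m → ℝ => F (D + P) (1 - ∑ i, u i) * Q D P u) (S m) :=
    integrableOn_body D P m (F (D + P)) (contF _)
  have hfun : ∀ u : Fin m → ℝ,
      (∫ x in (0:ℝ)..(1 - ∑ i, u i),
        F (D + P) (1 - ∑ i, (Fin.cons x u : Fin (m+1) → ℝ) i) * Q D P (Fin.cons x u))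
      = F D (1 - ∑ i, u i) * Q D P u - F (D + P) (1 - ∑ i, u i) * Q D P u := by
    intro u
    rw [pointwise_duhamel D P u]
    abel
  have e1 : R D P (m+1) = ∫ u in S m,
      (F D (1 - ∑ i, u i) * Q D P u - F (D + P) (1 - ∑ i, u i) * Q D P u) := by
    rw [R, hfub]
    exact setIntegral_congr_fun (measurableSet_S m) (fun u _ => by simpa using hfun u)
  rw [e1, integral_sub h1 h0, T, R]
  abel

lemma R_zero (D P : A) : R D P 0 = exp (-(D + P)) := by
  rw [R]
  have hS : S 0 = Set.univ := by
    ext u; simp [S]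
  rw [hS, Measure.restrict_univ]
  have : (fun u : Fin 0 → ℝ => F (D + P) (1 - ∑ i, u i) * Q D P u)
      = fun _ => exp (-(D + P)) := by
    funext u
    simp [F, Q, List.ofFn_zero]
  rw [this, integral_const]
  simp [MeasureTheory.volume_pi, Measure.real, Measure.pi_of_empty]

lemma T_zero (D P : A) : T D P 0 = exp (-D) := by
  rw [T]
  have hS : S 0 = Set.univ := by
    ext u; simp [S]
  rw [hS, Measure.restrict_univ]
  have : (fun u : Fin 0 → ℝ => F D (1 - ∑ i, u i) * Q D P u)
      = fun _ => exp (-D) := by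
    funext u
    simp [F, Q, List.ofFn_zero]
  rw [this, integral_const]
  simp [MeasureTheory.volume_pi, Measure.real, Measure.pi_of_empty]

lemma expansion (D P : A) (m : ℕ) :
    exp (-(D + P)) = (∑ j ∈ Finset.range (m+1), ((-1 : ℂ) ^ j) • T D P j)
      + ((-1 : ℂ) ^ (m+1)) • R D P (m+1) := by
  induction m with
  | zero =>
    rw [← R_zero D P, key D P 0]
    simp [sub_eq_add_neg]
  | succ m ih =>
    rw [ih, key D P (m+1),
      Finset.sum_range_succ (fun j => ((-1 : ℂ)) ^ j • T D P j) (m+1),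
      smul_sub, pow_succ (-1 : ℂ) (m+1), mul_neg_one, neg_smul]
    abel

lemma R_vanish (k : ℕ) (N : Set A)
    (hNr : ∀ a : A, ∀ x ∈ N, x * a ∈ N)
    (hNnil : ∀ f : Fin (k + 1) → A, (∀ i, f i ∈ N) → (List.ofFn f).prod = 0)
    (D P : A) (hP : P ∈ N) : R D P (k + 1) = 0 := by
  rw [R]
  have h : (fun u : Fin (k+1) → ℝ => F (D + P) (1 - ∑ i, u i) * Q D P u)
      = fun _ => (0 : A) := by
    funext u
    have hq : Q D P u = 0 := by
      rw [Q]; exact hNnil _ (fun i => hNr (F D (u i)) P hP)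
    rw [hq, mul_zero]
  rw [h]
  simp

end Stmt16Aux

/-- Volterra expansion: if `P` lies in an ideal `N` with `N^{k+1} = 0`, then
`e^{-(D+P)} = e^{-D} + ∑_{j=1}^{k} (-1)^j ∫_{Δ_j} e^{-u₀D} P e^{-u₁D} P ⋯ P e^{-u_jD} dσ(u)`,
the simplex `Δ_j` being parametrized by `(u₁,…,u_j)` with `u_i ≥ 0`, `∑ u_i ≤ 1`,
and `u₀ = 1 - ∑ u_i`. -/
theorem stmt16 {A : Type*} [NormedRing A] [NormedAlgebra ℂ A] [CompleteSpace A]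
    (k : ℕ) (N : Set A)
    (hNl : ∀ a : A, ∀ x ∈ N, a * x ∈ N) (hNr : ∀ a : A, ∀ x ∈ N, x * a ∈ N)
    (hNnil : ∀ f : Fin (k + 1) → A, (∀ i, f i ∈ N) → (List.ofFn f).prod = 0)
    (D P : A) (hP : P ∈ N) :
    NormedSpace.exp (-(D + P)) = NormedSpace.exp (-D)
      + ∑ j ∈ Finset.Icc 1 k, ((-1 : ℂ) ^ j) •
          ∫ u in {u : Fin j → ℝ | (∀ i, 0 ≤ u i) ∧ ∑ i, u i ≤ 1},
            NormedSpace.exp (-((1 - ∑ i, u i) • D)) *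
              (List.ofFn (fun i => P * NormedSpace.exp (-(u i • D)))).prod := by
  have h := Stmt16Aux.expansion D P k
  rw [Stmt16Aux.R_vanish k N hNr hNnil D P hP, smul_zero, add_zero] at h
  rw [h]
  have hsplit : Finset.range (k + 1) = insert 0 (Finset.Icc 1 k) := by
    ext x; simp [Finset.mem_range, Finset.mem_Icc]; omega
  rw [hsplit, Finset.sum_insert (by simp), pow_zero, one_smul, Stmt16Aux.T_zero]
  congr 1
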